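/- Let q be a prime power, let k, m be positive integers, and let C ⊊ Mat(k×m, F_q) be a non-zero proper F_q-linear subspace. Then minrk(C^⊥) ≤ min{k,m} − minrk(C) + 2, and equality holds if and only if C is an MRD code. -/

import Mathlib

open Matrix BigOperators

/-- The Gaussian (q-)binomial coefficient, defined via the q-Pascal recursion. -/
def qBinom (q : ℕ) : ℕ → ℕ → ℕ
  | _, 0 => 1
  | 0, _ + 1 => 0
  | s + 1, t + 1 => qBinom q s t + q ^ (t + 1) * qBinom q s (t + 1)

variable {F : Type} [Field F]

/-- The dual of a rank-metric code with respect to the trace product. -/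
def dualCode {k m : ℕ} (C : Submodule F (Matrix (Fin k) (Fin m) F)) :
    Submodule F (Matrix (Fin k) (Fin m) F) where
  carrier := {N | ∀ M ∈ C, Matrix.trace (M * Nᵀ) = 0}
  add_mem' := by
    intro a b ha hb M hM
    rw [Set.mem_setOf_eq] at *
    rw [Matrix.transpose_add, Matrix.mul_add, Matrix.trace_add, ha M hM, hb M hM, add_zero]
  zero_mem' := by
    intro M hM
    simp
  smul_mem' := by
    intro c N hN M hM
    rw [Set.mem_setOf_eq] at *
    rw [Matrix.transpose_smul, Matrix.mul_smul, Matrix.trace_smul, hN M hM, smul_zero]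

/-- Minimum rank of a code. -/
noncomputable def minrk {k m : ℕ} (C : Submodule F (Matrix (Fin k) (Fin m) F)) : ℕ :=
  sInf {r | ∃ M ∈ C, M ≠ 0 ∧ M.rank = r}

/-- Maximum rank of a code. -/
noncomputable def maxrk {k m : ℕ} (C : Submodule F (Matrix (Fin k) (Fin m) F)) : ℕ :=
  sSup {r | ∃ M ∈ C, M.rank = r}

/-- Rank distribution of a code. -/
noncomputable def rankDist {k m : ℕ} (C : Submodule F (Matrix (Fin k) (Fin m) F)) (i : ℕ) : ℕ :=
  Nat.card {M : Matrix (Fin k) (Fin m) F // M ∈ C ∧ M.rank = i}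

/-- MRD codes. -/
def IsMRD {k m : ℕ} (C : Submodule F (Matrix (Fin k) (Fin m) F)) : Prop :=
  C = ⊥ ∨ Module.finrank F ↥C = max k m * (min k m - minrk C + 1)

/-- Optimal anticodes. -/
def IsOptimalAnticode {k m : ℕ} (C : Submodule F (Matrix (Fin k) (Fin m) F)) : Prop :=
  Module.finrank F ↥C = max k m * maxrk C

/-- The subspace of matrices whose column space is contained in `U`. -/
def matIn {k : ℕ} (m : ℕ) (U : Submodule F (Fin k → F)) :
    Submodule F (Matrix (Fin k) (Fin m) F) where
  carrier := {M | ∀ j, Mᵀ j ∈ U}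
  add_mem' := by
    intro a b ha hb j
    rw [Matrix.transpose_add]
    exact U.add_mem (ha j) (hb j)
  zero_mem' := by
    intro j
    rw [Matrix.transpose_zero]
    exact U.zero_mem
  smul_mem' := by
    intro c M hM j
    rw [Matrix.transpose_smul]
    exact U.smul_mem c (hM j)

/-- The dual of a subspace of `Fin k → K` with respect to the standard inner product. -/
def dualPi {K : Type} [Field K] {k : ℕ} (C : Submodule K (Fin k → K)) :
    Submodule K (Fin k → K) where
  carrier := {β | ∀ α ∈ C, ∑ i, α i * β i = 0}
  add_mem' := by
    intro a b ha hb α hα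
    rw [Set.mem_setOf_eq] at *
    have : ∑ i, α i * (a + b) i = (∑ i, α i * a i) + ∑ i, α i * b i := by
      rw [← Finset.sum_add_distrib]
      exact Finset.sum_congr rfl fun i _ => by simp [mul_add]
    rw [this, ha α hα, hb α hα, add_zero]
  zero_mem' := by
    intro α hα
    simp
  smul_mem' := by
    intro c β hβ α hα
    rw [Set.mem_setOf_eq] at *
    have : ∑ i, α i * (c • β) i = c * ∑ i, α i * β i := by
      rw [Finset.mul_sum]
      exact Finset.sum_congr rfl fun i _ => by simp [smul_eq_mul]; ring
    rw [this, hβ α hα, mul_zero]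

/-- The matrix associated to a vector `α ∈ K^k` with respect to a basis `G` of `K` over `F`. -/
noncomputable def matOfBasis (F K : Type) [Field F] [Field K] [Algebra F K]
    (k m : ℕ) (G : Module.Basis (Fin m) F K) :
    (Fin k → K) →ₗ[F] Matrix (Fin k) (Fin m) F where
  toFun α := Matrix.of fun i j => G.repr (α i) j
  map_add' α β := by
    ext i j
    simp
  map_smul' c α := by
    ext i j
    simp

/-- The `h`-trace of a `k × m` matrix (`k ≤ m`). -/
def hTrace {k m : ℕ} (hkm : k ≤ m) (h : ℕ) (M : Matrix (Fin k) (Fin m) F) : F :=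
  ∑ i : Fin k, if (i : ℕ) < h then M i (Fin.castLE hkm i) else 0

section Aux

open Module Submodule Function

variable {k m : ℕ}

lemma trace_mul_transpose (M N : Matrix (Fin k) (Fin m) F) :
    Matrix.trace (M * Nᵀ) = ∑ i, ∑ j, M i j * N i j := by
  simp [Matrix.trace, Matrix.diag, Matrix.mul_apply]

/-- The trace pairing as a linear map into the dual. -/
noncomputable def pairLin (k m : ℕ) (F : Type) [Field F] :
    Matrix (Fin k) (Fin m) F →ₗ[F] Module.Dual F (Matrix (Fin k) (Fin m) F) where
  toFun N :=
    { toFun := fun M => ∑ i, ∑ j, M i j * N i j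
      map_add' := by intro a b; simp [add_mul, Finset.sum_add_distrib]
      map_smul' := by
        intro c a; simp only [Matrix.smul_apply, smul_eq_mul, RingHom.id_apply, Finset.mul_sum]
        exact Finset.sum_congr rfl fun i _ => Finset.sum_congr rfl fun j _ => by ring }
  map_add' a b := by
    ext M; simp [mul_add, Finset.sum_add_distrib]
  map_smul' c a := by
    ext M; simp only [LinearMap.coe_mk, AddHom.coe_mk, Matrix.smul_apply, smul_eq_mul,
      RingHom.id_apply, LinearMap.smul_apply, Finset.mul_sum]
    exact Finset.sum_congr rfl fun i _ => Finset.sum_congr rfl fun j _ => by ring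

lemma pairLin_injective : Injective (pairLin k m (F := F)) := by
  rw [← LinearMap.ker_eq_bot, eq_bot_iff]
  intro N hN
  rw [LinearMap.mem_ker] at hN
  rw [Submodule.mem_bot]
  ext i j
  have := LinearMap.congr_fun hN (Matrix.single i j 1)
  simpa [pairLin, Matrix.single, ite_and, Finset.sum_ite_eq] using this

lemma mem_dualCode {C : Submodule F (Matrix (Fin k) (Fin m) F)}
    {N : Matrix (Fin k) (Fin m) F} :
    N ∈ dualCode C ↔ ∀ M ∈ C, ∑ i, ∑ j, M i j * N i j = 0 := by
  have h : N ∈ dualCode C ↔ ∀ M ∈ C, Matrix.trace (M * Nᵀ) = 0 := Iff.rfl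
  rw [h]
  simp only [trace_mul_transpose]

/-- A generic computation: the `finrank` of the preimage of a dual annihilator
under an injective map into the dual. -/
lemma finrank_comap_dualAnnihilator {V : Type} [AddCommGroup V] [Module F V]
    [FiniteDimensional F V] (b : V →ₗ[F] Module.Dual F V) (hb : Injective b)
    (C : Submodule F V) :
    finrank F ((C.dualAnnihilator).comap b) + finrank F C = finrank F V := by
  have hsurj : Surjective b :=
    (LinearMap.injective_iff_surjective_of_finrank_eq_finrank
      (Subspace.dual_finrank_eq (K := F) (V := V)).symm).mp hb
  let e : V ≃ₗ[F] Module.Dual F V := LinearEquiv.ofBijective b ⟨hb, hsurj⟩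
  have h1 : (C.dualAnnihilator).comap b = (C.dualAnnihilator).comap (e : V →ₗ[F] _) := rfl
  have h2 : finrank F ((C.dualAnnihilator).comap (e : V →ₗ[F] _)) =
      finrank F C.dualAnnihilator :=
    LinearEquiv.finrank_eq (e.ofSubmodule' _)
  have h3 : finrank F C.dualAnnihilator = finrank F (V ⧸ C) :=
    (LinearEquiv.finrank_eq (Subspace.quotEquivAnnihilator C)).symm
  rw [h1, h2, h3, Submodule.finrank_quotient_add_finrank]

lemma finrank_mat : finrank F (Matrix (Fin k) (Fin m) F) = k * m := by
  rw [Module.finrank_matrix]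
  simp

lemma dualCode_eq_comap (C : Submodule F (Matrix (Fin k) (Fin m) F)) :
    dualCode C = (C.dualAnnihilator).comap (pairLin k m F) := by
  ext N
  rw [mem_dualCode, Submodule.mem_comap, Submodule.mem_dualAnnihilator]
  rfl

lemma finrank_dualCode (C : Submodule F (Matrix (Fin k) (Fin m) F)) :
    finrank F (dualCode C) + finrank F C = k * m := by
  rw [dualCode_eq_comap, ← finrank_mat (F := F) (k := k) (m := m)]
  exact finrank_comap_dualAnnihilator _ pairLin_injective C

/-- The standard pairing on `Fin k → F` as a map into the dual. -/
noncomputable def pairPiLin (k : ℕ) (F : Type) [Field F] :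
    (Fin k → F) →ₗ[F] Module.Dual F (Fin k → F) where
  toFun β :=
    { toFun := fun α => ∑ i, α i * β i
      map_add' := by intro a b; simp [add_mul, Finset.sum_add_distrib]
      map_smul' := by
        intro c a; simp only [Pi.smul_apply, smul_eq_mul, RingHom.id_apply, Finset.mul_sum]
        exact Finset.sum_congr rfl fun i _ => by ring }
  map_add' a b := by
    refine LinearMap.ext fun α => ?_
    simp [mul_add, Finset.sum_add_distrib]
  map_smul' c a := by
    refine LinearMap.ext fun α => ?_
    simp only [LinearMap.coe_mk, AddHom.coe_mk, Pi.smul_apply, smul_eq_mul,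
      RingHom.id_apply, LinearMap.smul_apply, Finset.mul_sum]
    exact Finset.sum_congr rfl fun i _ => by ring

lemma pairPiLin_injective : Injective (pairPiLin k (F := F)) := by
  rw [← LinearMap.ker_eq_bot, eq_bot_iff]
  intro β hβ
  rw [LinearMap.mem_ker] at hβ
  rw [Submodule.mem_bot]
  funext i
  have := LinearMap.congr_fun hβ (Pi.single i 1)
  simpa [pairPiLin, Pi.single_apply, Finset.sum_ite_eq] using this

lemma mem_dualPi {W : Submodule F (Fin k → F)} {β : Fin k → F} :
    β ∈ dualPi W ↔ ∀ α ∈ W, ∑ i, α i * β i = 0 := Iff.rfl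

lemma dualPi_eq_comap (W : Submodule F (Fin k → F)) :
    dualPi W = (W.dualAnnihilator).comap (pairPiLin k F) := by
  ext β
  rw [mem_dualPi, Submodule.mem_comap, Submodule.mem_dualAnnihilator]
  rfl

lemma finrank_dualPi (W : Submodule F (Fin k → F)) :
    finrank F (dualPi W) + finrank F W = k := by
  rw [dualPi_eq_comap]
  have := finrank_comap_dualAnnihilator (pairPiLin k F) pairPiLin_injective W
  rwa [Module.finrank_pi, Fintype.card_fin] at this

lemma mem_matIn {U : Submodule F (Fin k → F)} {M : Matrix (Fin k) (Fin m) F} :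
    M ∈ matIn m U ↔ ∀ j, Mᵀ j ∈ U := Iff.rfl

/-- `matIn m U` is linearly equivalent to `Fin m → U`. -/
noncomputable def matInEquiv (U : Submodule F (Fin k → F)) :
    (matIn m U) ≃ₗ[F] (Fin m → U) where
  toFun M := fun j => ⟨(M : Matrix (Fin k) (Fin m) F)ᵀ j, M.2 j⟩
  map_add' a b := by funext j; apply Subtype.ext; rfl
  map_smul' c a := by funext j; apply Subtype.ext; rfl
  invFun f := ⟨Matrix.of fun i j => (f j : Fin k → F) i, fun j => by
    have : ((Matrix.of fun i j => (f j : Fin k → F) i)ᵀ j) = (f j : Fin k → F) := rfl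
    rw [this]; exact (f j).2⟩
  left_inv M := rfl
  right_inv f := rfl

lemma finrank_matIn (U : Submodule F (Fin k → F)) :
    finrank F (matIn m U) = m * finrank F U := by
  rw [LinearEquiv.finrank_eq (matInEquiv U), Module.finrank_pi_fintype,
    Finset.sum_const, Finset.card_univ, Fintype.card_fin, smul_eq_mul]

lemma rank_le_of_mem_matIn {U : Submodule F (Fin k → F)} {M : Matrix (Fin k) (Fin m) F}
    (h : M ∈ matIn m U) : M.rank ≤ finrank F U := by
  rw [Matrix.rank_eq_finrank_span_cols]
  exact Submodule.finrank_mono (Submodule.span_le.mpr (by rintro _ ⟨j, rfl⟩; exact h j))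

lemma mem_matIn_colSpan (M : Matrix (Fin k) (Fin m) F) :
    M ∈ matIn m (Submodule.span F (Set.range Mᵀ)) :=
  fun j => Submodule.subset_span ⟨j, rfl⟩

lemma matrix_rank_pos {M : Matrix (Fin k) (Fin m) F} (h : M ≠ 0) : 0 < M.rank := by
  rw [Matrix.rank_eq_finrank_span_cols, Nat.pos_iff_ne_zero]
  intro h0
  rw [Submodule.finrank_eq_zero] at h0
  apply h
  ext i j
  have : Mᵀ j ∈ Submodule.span F (Set.range M.col) := Submodule.subset_span ⟨j, rfl⟩
  rw [h0, Submodule.mem_bot] at this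
  have := congrFun this i
  simpa using this

lemma minrk_exists {C : Submodule F (Matrix (Fin k) (Fin m) F)} (h : C ≠ ⊥) :
    ∃ M ∈ C, M ≠ 0 ∧ M.rank = minrk C := by
  obtain ⟨M, hM, hMne⟩ := C.ne_bot_iff.mp h
  unfold minrk
  exact Nat.sInf_mem (⟨M.rank, M, hM, hMne, rfl⟩ :
    {r | ∃ M ∈ C, M ≠ 0 ∧ M.rank = r}.Nonempty)

lemma minrk_le {C : Submodule F (Matrix (Fin k) (Fin m) F)} {M : Matrix (Fin k) (Fin m) F}
    (hM : M ∈ C) (h : M ≠ 0) : minrk C ≤ M.rank := by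
  unfold minrk
  exact Nat.sInf_le ⟨M, hM, h, rfl⟩

lemma minrk_pos {C : Submodule F (Matrix (Fin k) (Fin m) F)} (h : C ≠ ⊥) :
    0 < minrk C := by
  obtain ⟨M, _, hMne, hMr⟩ := minrk_exists h
  rw [← hMr]
  exact matrix_rank_pos hMne

lemma minrk_le_height {C : Submodule F (Matrix (Fin k) (Fin m) F)} (h : C ≠ ⊥) :
    minrk C ≤ k := by
  obtain ⟨M, _, _, hMr⟩ := minrk_exists h
  rw [← hMr]
  exact M.rank_le_height

lemma exists_submodule_le_finrank_eq {V : Type} [AddCommGroup V] [Module F V]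
    [FiniteDimensional F V] (W : Submodule F V) (n : ℕ) (hn : n ≤ finrank F W) :
    ∃ U : Submodule F V, U ≤ W ∧ finrank F U = n := by
  let b := Module.finBasis F W
  let v : Fin n → V := fun i => (b (Fin.castLE hn i) : V)
  have hli : LinearIndependent F v := by
    have h1 : LinearIndependent F (fun i : Fin n => b (Fin.castLE hn i)) :=
      b.linearIndependent.comp _ (Fin.castLE_injective hn)
    exact h1.map' W.subtype (Submodule.ker_subtype W)
  refine ⟨Submodule.span F (Set.range v), ?_, ?_⟩
  · rw [Submodule.span_le]
    rintro _ ⟨i, rfl⟩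
    exact (b (Fin.castLE hn i)).2
  · rw [finrank_span_eq_card hli, Fintype.card_fin]

lemma inf_matIn_eq_bot {C : Submodule F (Matrix (Fin k) (Fin m) F)} (hC0 : C ≠ ⊥)
    {U : Submodule F (Fin k → F)} (hU : finrank F U = minrk C - 1) :
    C ⊓ matIn m U = ⊥ := by
  rw [eq_bot_iff]
  intro M hM
  rw [Submodule.mem_inf] at hM
  rw [Submodule.mem_bot]
  by_contra hne
  have h1 := minrk_le hM.1 hne
  have h2 := rank_le_of_mem_matIn hM.2
  rw [hU] at h2
  have h3 := minrk_pos hC0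
  omega

/-- The Singleton bound, in additive form. -/
lemma singleton_bound (hkm : k ≤ m) {D : Submodule F (Matrix (Fin k) (Fin m) F)}
    (hD : D ≠ ⊥) : finrank F D + m * (minrk D - 1) ≤ k * m := by
  have hle : minrk D - 1 ≤ finrank F (⊤ : Submodule F (Fin k → F)) := by
    rw [finrank_top, Module.finrank_pi, Fintype.card_fin]
    have := minrk_le_height hD
    omega
  obtain ⟨U, -, hU⟩ := exists_submodule_le_finrank_eq (⊤ : Submodule F (Fin k → F)) _ hle
  have hdisj : D ⊓ matIn m U = ⊥ := inf_matIn_eq_bot hD hU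
  have hsum := Submodule.finrank_sup_add_finrank_inf_eq D (matIn m U)
  rw [hdisj, finrank_bot, add_zero, finrank_matIn, hU] at hsum
  have hle2 := Submodule.finrank_le (D ⊔ matIn m U)
  rw [finrank_mat] at hle2
  omega

lemma mrd_sup {C : Submodule F (Matrix (Fin k) (Fin m) F)} (hC0 : C ≠ ⊥)
    (hdim : finrank F C = m * (k - minrk C + 1)) {U : Submodule F (Fin k → F)}
    (hU : finrank F U = minrk C - 1) (hdk : minrk C ≤ k) :
    C ⊔ matIn m U = ⊤ := by
  apply Submodule.eq_top_of_finrank_eq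
  have hdisj : C ⊓ matIn m U = ⊥ := inf_matIn_eq_bot hC0 hU
  have hsum := Submodule.finrank_sup_add_finrank_inf_eq C (matIn m U)
  rw [hdisj, finrank_bot, add_zero, hdim, finrank_matIn, hU] at hsum
  rw [hsum, finrank_mat, ← Nat.mul_add]
  have hd1 := minrk_pos hC0
  have harith : k - minrk C + 1 + (minrk C - 1) = k := by omega
  rw [harith, Nat.mul_comm]

/-- Main lemma: the case `k ≤ m`. -/
lemma main_lemma {F : Type} [Field F] {k m : ℕ} (hk : 0 < k) (hkm : k ≤ m)
    (C : Submodule F (Matrix (Fin k) (Fin m) F)) (hC0 : C ≠ ⊥) (hCt : C ≠ ⊤) :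
    minrk (dualCode C) ≤ k - minrk C + 2 ∧
      (minrk (dualCode C) = k - minrk C + 2 ↔ IsMRD C) := by
  have hm : 0 < m := lt_of_lt_of_le hk hkm
  have hfd := finrank_dualCode C
  have hClt : finrank F C < k * m := by
    have := Submodule.finrank_lt hCt
    rwa [finrank_mat] at this
  have hCpos : 0 < finrank F C :=
    Nat.pos_of_ne_zero fun h => hC0 (Submodule.finrank_eq_zero.mp h)
  have hD0 : dualCode C ≠ ⊥ := by
    intro h
    rw [h, finrank_bot] at hfd
    omega
  have hd1 : 1 ≤ minrk C := minrk_pos hC0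
  have hdk : minrk C ≤ k := minrk_le_height hC0
  have hd'1 : 1 ≤ minrk (dualCode C) := minrk_pos hD0
  have hd'k : minrk (dualCode C) ≤ k := minrk_le_height hD0
  have hs1 := singleton_bound hkm hC0
  have hs2 := singleton_bound hkm hD0
  set d := minrk C with hd
  set d' := minrk (dualCode C) with hd'
  -- key arithmetic identity
  have key : m * (k - d + 1) + m * (d - 1) = k * m := by
    rw [← Nat.mul_add, show k - d + 1 + (d - 1) = k by omega, Nat.mul_comm]
  have hub : finrank F C ≤ m * (k - d + 1) := by omega
  have hlb : m * (d' - 1) ≤ finrank F C := by omega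
  have hcmp : d' - 1 ≤ k - d + 1 := by
    have h1 : m * (d' - 1) ≤ m * (k - d + 1) := le_trans hlb hub
    exact Nat.le_of_mul_le_mul_left h1 hm
  have part1 : d' ≤ k - d + 2 := by omega
  refine ⟨part1, ?_, ?_⟩
  · -- equality implies MRD
    intro heq
    have hd2 : 2 ≤ d := by omega
    have hdim : finrank F C = m * (k - d + 1) := by
      apply le_antisymm hub
      have : d' - 1 = k - d + 1 := by omega
      rw [this] at hlb
      exact hlb
    right
    rw [max_eq_right hkm, min_eq_left hkm, ← hd, hdim]
  · -- MRD implies equality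
    intro hmrd
    rcases hmrd with h | hdim
    · exact absurd h hC0
    rw [max_eq_right hkm, min_eq_left hkm, ← hd] at hdim
    have hd2 : 2 ≤ d := by
      by_contra h2
      have hd1' : d = 1 := by omega
      rw [hd1', show k - 1 + 1 = k by omega] at hdim
      apply hCt
      apply Submodule.eq_top_of_finrank_eq
      rw [hdim, finrank_mat, Nat.mul_comm]
    apply le_antisymm part1
    by_contra h'
    have hd'le : d' ≤ k - d + 1 := by omega
    obtain ⟨N, hNmem, hNne, hNrk⟩ := minrk_exists hD0
    set W := Submodule.span F (Set.range Nᵀ) with hW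
    have hWrk : finrank F W = d' := by
      rw [hd', ← hNrk, Matrix.rank_eq_finrank_span_cols]
      rfl
    have hdp := finrank_dualPi W
    have hUex : d - 1 ≤ finrank F (dualPi W) := by omega
    obtain ⟨U, hUle, hUrk⟩ := exists_submodule_le_finrank_eq (dualPi W) _ hUex
    have htop : C ⊔ matIn m U = ⊤ := mrd_sup hC0 hdim hUrk hdk
    have hsub : C ⊔ matIn m U ≤ LinearMap.ker (pairLin k m F N) := by
      apply sup_le
      · intro M hM
        rw [LinearMap.mem_ker]
        exact mem_dualCode.mp hNmem M hM
      · intro M hM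
        rw [LinearMap.mem_ker]
        show ∑ i, ∑ j, M i j * N i j = 0
        rw [Finset.sum_comm]
        apply Finset.sum_eq_zero
        intro j _
        have h1 : Mᵀ j ∈ dualPi W := hUle (hM j)
        have h2 : Nᵀ j ∈ W := Submodule.subset_span ⟨j, rfl⟩
        have h3 := mem_dualPi.mp h1 (Nᵀ j) h2
        rw [← h3]
        exact Finset.sum_congr rfl fun i _ => mul_comm _ _
    rw [htop, top_le_iff] at hsub
    have hker : pairLin k m F N = 0 := LinearMap.ker_eq_top.mp hsub
    exact hNne (pairLin_injective (hker.trans (map_zero _).symm))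

section Transpose

lemma minrk_map_transpose (C : Submodule F (Matrix (Fin k) (Fin m) F)) :
    minrk (C.map (Matrix.transposeLinearEquiv (Fin k) (Fin m) F F :
      Matrix (Fin k) (Fin m) F →ₗ[F] Matrix (Fin m) (Fin k) F)) = minrk C := by
  unfold minrk
  congr 1
  ext r
  constructor
  · rintro ⟨M, hM, hne, rfl⟩
    rw [Submodule.mem_map] at hM
    obtain ⟨P, hP, rfl⟩ := hM
    refine ⟨P, hP, ?_, ?_⟩
    · intro h
      apply hne
      rw [h]
      exact map_zero _
    · exact (Matrix.rank_transpose P).symm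
  · rintro ⟨M, hM, hne, rfl⟩
    refine ⟨Mᵀ, ?_, ?_, ?_⟩
    · exact Submodule.mem_map_of_mem (f := (Matrix.transposeLinearEquiv (Fin k) (Fin m) F F :
        Matrix (Fin k) (Fin m) F →ₗ[F] Matrix (Fin m) (Fin k) F)) hM
    · intro h
      apply hne
      ext i j
      have := congrFun (congrFun h j) i
      simpa using this
    · exact Matrix.rank_transpose M

lemma dualCode_map_transpose (C : Submodule F (Matrix (Fin k) (Fin m) F)) :
    dualCode (C.map (Matrix.transposeLinearEquiv (Fin k) (Fin m) F F :
      Matrix (Fin k) (Fin m) F →ₗ[F] Matrix (Fin m) (Fin k) F)) =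
      (dualCode C).map (Matrix.transposeLinearEquiv (Fin k) (Fin m) F F :
      Matrix (Fin k) (Fin m) F →ₗ[F] Matrix (Fin m) (Fin k) F) := by
  ext N
  rw [Submodule.mem_map_equiv, mem_dualCode]
  have hsymm : (Matrix.transposeLinearEquiv (Fin k) (Fin m) F F).symm N = Nᵀ := rfl
  rw [hsymm, mem_dualCode]
  constructor
  · intro h M hM
    have := h Mᵀ (Submodule.mem_map_of_mem
      (f := (Matrix.transposeLinearEquiv (Fin k) (Fin m) F F :
      Matrix (Fin k) (Fin m) F →ₗ[F] Matrix (Fin m) (Fin k) F)) hM)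
    rw [← this, Finset.sum_comm]
    rfl
  · intro h M hM
    rw [Submodule.mem_map] at hM
    obtain ⟨P, hP, rfl⟩ := hM
    have := h P hP
    rw [← this, Finset.sum_comm]
    rfl

lemma finrank_map_transpose (C : Submodule F (Matrix (Fin k) (Fin m) F)) :
    finrank F (C.map (Matrix.transposeLinearEquiv (Fin k) (Fin m) F F :
      Matrix (Fin k) (Fin m) F →ₗ[F] Matrix (Fin m) (Fin k) F)) =
      finrank F C :=
  LinearEquiv.finrank_map_eq _ C

lemma isMRD_map_transpose (C : Submodule F (Matrix (Fin k) (Fin m) F)) :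
    IsMRD (C.map (Matrix.transposeLinearEquiv (Fin k) (Fin m) F F :
      Matrix (Fin k) (Fin m) F →ₗ[F] Matrix (Fin m) (Fin k) F)) ↔ IsMRD C := by
  unfold IsMRD
  rw [minrk_map_transpose, finrank_map_transpose, max_comm, min_comm]
  apply or_congr _ Iff.rfl
  rw [← Submodule.finrank_eq_zero (S := C.map _), ← Submodule.finrank_eq_zero (S := C),
    finrank_map_transpose]

end Transpose

end Aux

/-- Bound on the minimum rank of the dual code, with equality iff `C` is MRD. -/
theorem stmt_8 (F : Type) [Field F] [Fintype F] (k m : ℕ) (hk : 0 < k) (hm : 0 < m)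
    (C : Submodule F (Matrix (Fin k) (Fin m) F)) (hC0 : C ≠ ⊥) (hCt : C ≠ ⊤) :
    minrk (dualCode C) ≤ min k m - minrk C + 2 ∧
      (minrk (dualCode C) = min k m - minrk C + 2 ↔ IsMRD C) := by
  rcases le_or_gt k m with hkm | hmk
  · rw [min_eq_left hkm]
    exact main_lemma hk hkm C hC0 hCt
  · have hmk' : m ≤ k := hmk.le
    set τ : Matrix (Fin k) (Fin m) F →ₗ[F] Matrix (Fin m) (Fin k) F :=
      (Matrix.transposeLinearEquiv (Fin k) (Fin m) F F :
      Matrix (Fin k) (Fin m) F →ₗ[F] Matrix (Fin m) (Fin k) F) with hτ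
    set C' := C.map τ with hC'
    have hfr : Module.finrank F C' = Module.finrank F C := finrank_map_transpose C
    have hC0' : C' ≠ ⊥ := by
      intro h
      apply hC0
      rw [← Submodule.finrank_eq_zero (S := C), ← hfr, h, finrank_bot F (Matrix (Fin m) (Fin k) F)]
    have hCt' : C' ≠ ⊤ := by
      intro h
      apply hCt
      apply Submodule.eq_top_of_finrank_eq
      have h1 : Module.finrank F C' = Module.finrank F (Matrix (Fin m) (Fin k) F) := by
        rw [h, finrank_top F (Matrix (Fin m) (Fin k) F)]
      rw [← hfr, h1, finrank_mat, finrank_mat, Nat.mul_comm]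
    have hmain := main_lemma hm hmk' C' hC0' hCt'
    rw [hC', hτ, dualCode_map_transpose, minrk_map_transpose, minrk_map_transpose,
      isMRD_map_transpose] at hmain
    rw [min_eq_right hmk']
    exact hmain
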